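/- Let N be a nonnegative K×K real matrix with spectral radius ρ(N) < 1 and with e'N ≤ e' entrywise, where e is the all-ones vector. Then for every y ∈ (0,1), the matrix y(I−N)² + (1−y)I is invertible and the row vector e'(y(I−N)² + (1−y)I)^{−1} is entrywise strictly positive. -/

import Mathlib

open Matrix

noncomputable def cseq (y : ℝ) : ℕ → ℝ
  | 0 => 1
  | 1 => 2 * y
  | (k+2) => 2 * y * cseq y (k+1) - y * cseq y k

lemma cseq_rec (y : ℝ) (k : ℕ) :
    cseq y (k+2) = 2 * y * cseq y (k+1) - y * cseq y k := rfl

lemma a_sq {y w : ℝ} (hw2 : w ^ 2 = y * (1 - y)) :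
    (⟨y, w⟩ : ℂ) ^ 2 = 2 * (y:ℂ) * ⟨y, w⟩ - (y:ℂ) := by
  apply Complex.ext <;>
    simp [pow_two, Complex.mul_re, Complex.mul_im, Complex.sub_re, Complex.sub_im,
      Complex.ofReal_re, Complex.ofReal_im] <;> nlinarith [hw2]

lemma cseq_im {y w : ℝ} (hw2 : w ^ 2 = y * (1 - y)) (k : ℕ) :
    cseq y k * w = ((⟨y, w⟩ : ℂ) ^ (k+1)).im := by
  set a : ℂ := ⟨y, w⟩ with ha
  have key : ∀ k, cseq y k * w = (a ^ (k+1)).im ∧ cseq y (k+1) * w = (a ^ (k+2)).im := by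
    intro k
    induction k with
    | zero =>
      constructor
      · simp [cseq, ha]
      · have h2 : a ^ 2 = 2 * (y:ℂ) * a - (y:ℂ) := a_sq hw2
        rw [h2]
        simp [cseq, ha, Complex.mul_im]
    | succ n ih =>
      refine ⟨ih.2, ?_⟩
      have h3 : a ^ (n+3) = a ^ 2 * a ^ (n+1) := by ring
      have h2 : a ^ 2 = 2 * (y:ℂ) * a - (y:ℂ) := a_sq hw2
      rw [h3, h2]
      have e1 : (2 * (y:ℂ) * a - (y:ℂ)) * a ^ (n+1)
          = 2 * (y:ℂ) * (a * a ^ (n+1)) - (y:ℂ) * a ^ (n+1) := by ring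
      rw [e1]
      have e2 : a * a ^ (n+1) = a ^ (n+2) := by ring
      rw [e2]
      simp only [Complex.sub_im, Complex.mul_im, Complex.ofReal_im, Complex.ofReal_re,
        Complex.mul_re, Complex.re_ofNat, Complex.im_ofNat]
      rw [cseq_rec]
      linear_combination (2*y) * ih.2 - y * ih.1
  exact (key k).1

lemma abs_a {y w : ℝ} (hy0 : 0 < y) (hy1 : y < 1) (hw : w = Real.sqrt (y * (1-y))) :
    ‖(⟨y, w⟩ : ℂ)‖ = Real.sqrt y := by
  have hw2 : w ^ 2 = y * (1 - y) := by
    rw [hw]; exact Real.sq_sqrt (by nlinarith)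
  rw [Complex.norm_def, Complex.normSq_mk]
  congr 1
  nlinarith [hw2]

lemma cseq_bound {y w : ℝ} (hy0 : 0 < y) (hy1 : y < 1) (hw : w = Real.sqrt (y * (1-y))) (k : ℕ) :
    |cseq y k| ≤ Real.sqrt y ^ (k+1) / w := by
  have hwpos : 0 < w := by rw [hw]; exact Real.sqrt_pos.mpr (by nlinarith)
  have hw2 : w ^ 2 = y * (1 - y) := by rw [hw]; exact Real.sq_sqrt (by nlinarith)
  rw [le_div_iff₀ hwpos]
  calc |cseq y k| * w = |cseq y k * w| := by
        rw [abs_mul, abs_of_pos hwpos]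
    _ = |((⟨y, w⟩ : ℂ) ^ (k+1)).im| := by rw [cseq_im hw2]
    _ ≤ ‖(⟨y, w⟩ : ℂ) ^ (k+1)‖ := Complex.abs_im_le_norm _
    _ = Real.sqrt y ^ (k+1) := by rw [norm_pow, abs_a hy0 hy1 hw]

lemma cseq_psum {y w : ℝ} (hy0 : 0 < y) (hy1 : y < 1) (hw : w = Real.sqrt (y * (1-y))) (n : ℕ) :
    (∑ k ∈ Finset.range (n+1), cseq y k) * (1 - y) = 1 - ((⟨y, w⟩ : ℂ) ^ (n+1)).re := by
  have hwpos : 0 < w := by rw [hw]; exact Real.sqrt_pos.mpr (by nlinarith)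
  have hw2 : w ^ 2 = y * (1 - y) := by rw [hw]; exact Real.sq_sqrt (by nlinarith)
  set a : ℂ := ⟨y, w⟩ with ha
  induction n with
  | zero => simp [cseq, ha]
  | succ n ih =>
    rw [Finset.sum_range_succ, add_mul, ih]
    have key : cseq y (n+1) * (1 - y) = (a ^ (n+1)).re - (a ^ (n+2)).re := by
      have him : cseq y (n+1) * w = (a ^ (n+2)).im := cseq_im hw2 (n+1)
      have hpow : a ^ (n+2) = a * a ^ (n+1) := by ring
      have hre : (a ^ (n+2)).re = y * (a ^ (n+1)).re - w * (a ^ (n+1)).im := by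
        rw [hpow, Complex.mul_re]
      have him2 : (a ^ (n+2)).im = w * (a ^ (n+1)).re + y * (a ^ (n+1)).im := by
        rw [hpow, Complex.mul_im]; ring
      have : cseq y (n+1) * (1 - y) * w = ((a ^ (n+1)).re - (a ^ (n+2)).re) * w := by
        linear_combination (1-y)*him + w*hre + (1-y)*him2 - (a^(n+1)).im * hw2
      exact mul_right_cancel₀ hwpos.ne' this
    linarith [key]


/-- If `N` is an entrywise nonnegative `K×K` real matrix with spectral radius `< 1`
(all complex eigenvalues of modulus `< 1`) and the column sums of `N` are at most `1`
(`e'N ≤ e'`), then for every `y ∈ (0,1)` the matrix `y(I−N)² + (1−y)I` is invertible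
and every entry of the row vector `e'(y(I−N)² + (1−y)I)⁻¹` is strictly positive. -/
theorem rowvec_pos_of_substochastic {K : ℕ} (N : Matrix (Fin K) (Fin K) ℝ)
    (hN : ∀ i j, 0 ≤ N i j)
    (hρ : ∀ μ ∈ spectrum ℂ (N.map (Complex.ofReal)), ‖μ‖ < 1)
    (hcol : ∀ j, ∑ i, N i j ≤ 1)
    (y : ℝ) (hy : y ∈ Set.Ioo (0:ℝ) 1) :
    IsUnit (y • (1 - N) ^ 2 + (1 - y) • (1 : Matrix (Fin K) (Fin K) ℝ)) ∧
    ∀ j, 0 < ∑ i,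
      ((y • (1 - N) ^ 2 + (1 - y) • (1 : Matrix (Fin K) (Fin K) ℝ))⁻¹ :
        Matrix (Fin K) (Fin K) ℝ) i j := by
  obtain ⟨hy0, hy1⟩ := hy
  have hy1' : (0:ℝ) < 1 - y := by linarith
  set r := Real.sqrt y with hr
  have hr2 : r ^ 2 = y := Real.sq_sqrt hy0.le
  have hr0 : 0 < r := Real.sqrt_pos.mpr hy0
  have hr1 : r < 1 := by nlinarith
  set w := Real.sqrt (y * (1 - y)) with hw
  have hwpos : 0 < w := Real.sqrt_pos.mpr (by nlinarith)
  have hcb : ∀ k, |cseq y k| ≤ r ^ (k+1) / w := fun k => cseq_bound hy0 hy1 hw k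
  -- geometric summability helper with index shift
  have hsumg : ∀ (m : ℕ) (v : ℕ → ℝ), (∀ k, |v k| ≤ 1) →
      Summable (fun k => cseq y (k + m) * v k) := by
    intro m v hv
    apply Summable.of_norm_bounded (g := fun k => (r / w) * r ^ k)
      ((summable_geometric_of_lt_one hr0.le hr1).mul_left _)
    intro k
    rw [Real.norm_eq_abs, abs_mul]
    have h1 : |cseq y (k+m)| ≤ r ^ (k+m+1) / w := hcb (k+m)
    have h2 : r ^ (k+m+1) ≤ r ^ (k+1) := pow_le_pow_of_le_one hr0.le hr1.le (by omega)
    calc |cseq y (k+m)| * |v k| ≤ (r ^ (k+1) / w) * 1 := by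
          apply mul_le_mul (h1.trans (by gcongr)) (hv k) (abs_nonneg _) (by positivity)
      _ = (r / w) * r ^ k := by rw [pow_succ]; ring
  -- matrix entry facts
  have hNk : ∀ k i j, 0 ≤ (N ^ k) i j := by
    intro k
    induction k with
    | zero =>
      intro i j
      rw [pow_zero, Matrix.one_apply]
      split <;> norm_num
    | succ k ih =>
      intro i j
      rw [pow_succ, Matrix.mul_apply]
      exact Finset.sum_nonneg fun l _ => mul_nonneg (ih i l) (hN l j)
  have hNcol : ∀ k j, ∑ i, (N ^ k) i j ≤ 1 := by
    intro k
    induction k with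
    | zero => intro j; simp [Matrix.one_apply]
    | succ k ih =>
      intro j
      rw [pow_succ]
      have hcomm : ∑ i, (N ^ k * N) i j = ∑ l, (∑ i, (N ^ k) i l) * N l j := by
        simp only [Matrix.mul_apply]
        rw [Finset.sum_comm]
        simp [Finset.sum_mul]
      rw [hcomm]
      calc ∑ l, (∑ i, (N ^ k) i l) * N l j ≤ ∑ l, 1 * N l j := by
            apply Finset.sum_le_sum
            intro l _
            exact mul_le_mul_of_nonneg_right (ih l) (hN l j)
        _ = ∑ l, N l j := by simp
        _ ≤ 1 := hcol j
  have hNentry : ∀ k i j, (N ^ k) i j ≤ 1 := by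
    intro k i j
    calc (N ^ k) i j ≤ ∑ i', (N ^ k) i' j :=
          Finset.single_le_sum (fun i' _ => hNk k i' j) (Finset.mem_univ i)
      _ ≤ 1 := hNcol k j
  have habs1 : ∀ k i j, |(N ^ k) i j| ≤ 1 := fun k i j =>
    abs_le.mpr ⟨by linarith [hNk k i j], hNentry k i j⟩
  have hmono : ∀ k j, ∑ i, (N ^ (k+1)) i j ≤ ∑ i, (N ^ k) i j := by
    intro k j
    rw [pow_succ']
    have hcomm : ∑ i, (N * N ^ k) i j = ∑ l, (∑ i, N i l) * (N ^ k) l j := by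
      simp only [Matrix.mul_apply]
      rw [Finset.sum_comm]
      simp [Finset.sum_mul]
    rw [hcomm]
    calc ∑ l, (∑ i, N i l) * (N ^ k) l j ≤ ∑ l, 1 * (N ^ k) l j := by
          apply Finset.sum_le_sum
          intro l _
          exact mul_le_mul_of_nonneg_right (hcol l) (hNk k l j)
      _ = ∑ l, (N ^ k) l j := by simp
  -- the candidate inverse
  set M := y • (1 - N) ^ 2 + (1 - y) • (1 : Matrix (Fin K) (Fin K) ℝ) with hMdef
  set R : Matrix (Fin K) (Fin K) ℝ := fun i j => ∑' k, cseq y k * (N ^ k) i j with hRdef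
  have hsumR : ∀ i j, Summable fun k => cseq y k * (N ^ k) i j :=
    fun i j => hsumg 0 (fun k => (N ^ k) i j) (fun k => habs1 k i j)
  have hNR : ∀ (m : ℕ) (i j : Fin K),
      (N ^ m * R) i j = ∑' k, cseq y k * (N ^ (k + m)) i j := by
    intro m i j
    rw [Matrix.mul_apply]
    calc ∑ l, (N ^ m) i l * R l j
        = ∑ l, ∑' k, (N ^ m) i l * (cseq y k * (N ^ k) l j) :=
          Finset.sum_congr rfl fun l _ => (tsum_mul_left).symm
      _ = ∑' k, ∑ l, (N ^ m) i l * (cseq y k * (N ^ k) l j) :=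
          (Summable.tsum_finsetSum fun l _ => (hsumR l j).mul_left _).symm
      _ = ∑' k, cseq y k * (N ^ (k + m)) i j := by
          apply tsum_congr; intro k
          rw [add_comm k m, pow_add, Matrix.mul_apply, Finset.mul_sum]
          exact Finset.sum_congr rfl fun l _ => by ring
  have hM2 : M = 1 - (2*y) • N + y • (N ^ 2) := by
    have h : (1 - N) ^ 2 = 1 - N - N + N * N := by noncomm_ring
    rw [hMdef, h]
    have h2 : N ^ 2 = N * N := sq N
    rw [h2]
    module
  have hMR : M * R = 1 := by
    ext i j
    rw [hM2, Matrix.add_mul, Matrix.sub_mul, Matrix.one_mul, Matrix.smul_mul, Matrix.smul_mul]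
    rw [Matrix.add_apply, Matrix.sub_apply, Matrix.smul_apply, Matrix.smul_apply,
      smul_eq_mul, smul_eq_mul]
    have e1 : (N * R) i j = ∑' k, cseq y k * (N ^ (k + 1)) i j := by
      have h := hNR 1 i j
      rw [pow_one] at h
      exact h
    have e2 : (N ^ 2 * R) i j = ∑' k, cseq y k * (N ^ (k + 2)) i j := hNR 2 i j
    rw [e1, e2]
    have hRij : R i j = ∑' k, cseq y k * (N ^ k) i j := rfl
    rw [hRij]
    set v : ℕ → ℝ := fun k => (N ^ k) i j with hv
    have hv1 : ∀ k, |v k| ≤ 1 := fun k => habs1 k i j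
    have s0 : Summable fun k => cseq y k * v k := hsumg 0 v hv1
    have s1 : Summable fun k => cseq y (k+1) * v (k+1) :=
      hsumg 1 (fun k => v (k+1)) (fun k => hv1 (k+1))
    have s2 : Summable fun k => cseq y (k+2) * v (k+2) :=
      hsumg 2 (fun k => v (k+2)) (fun k => hv1 (k+2))
    have sB : Summable fun k => cseq y k * v (k+1) :=
      hsumg 0 (fun k => v (k+1)) (fun k => hv1 (k+1))
    have sB1 : Summable fun k => cseq y (k+1) * v (k+2) :=
      hsumg 1 (fun k => v (k+2)) (fun k => hv1 (k+2))
    have sC : Summable fun k => cseq y k * v (k+2) :=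
      hsumg 0 (fun k => v (k+2)) (fun k => hv1 (k+2))
    have hA : (∑' k, cseq y k * v k)
        = cseq y 0 * v 0 + (cseq y 1 * v 1 + ∑' k, cseq y (k+2) * v (k+2)) := by
      rw [Summable.tsum_eq_zero_add s0]
      congr 1
      exact Summable.tsum_eq_zero_add s1
    have hB : (∑' k, cseq y k * v (k+1))
        = cseq y 0 * v 1 + ∑' k, cseq y (k+1) * v (k+2) := Summable.tsum_eq_zero_add sB
    have hcomb : (∑' k, cseq y (k+2) * v (k+2)) - 2*y*(∑' k, cseq y (k+1) * v (k+2))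
        + y*(∑' k, cseq y k * v (k+2)) = 0 := by
      rw [← tsum_mul_left (a := 2*y), ← tsum_mul_left (a := y),
        ← Summable.tsum_sub s2 (sB1.mul_left (2*y)), ← Summable.tsum_add ((s2).sub (sB1.mul_left (2*y))) (sC.mul_left y)]
      rw [show (fun k => cseq y (k+2) * v (k+2) - 2*y*(cseq y (k+1) * v (k+2))
          + y*(cseq y k * v (k+2))) = fun k => (0:ℝ) from ?_, tsum_zero]
      funext k
      rw [cseq_rec]
      ring
    have hone : (1 : Matrix (Fin K) (Fin K) ℝ) i j = v 0 := by
      rw [hv]; simp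
    rw [hone, hA, hB]
    have hc0 : cseq y 0 = 1 := rfl
    have hc1 : cseq y 1 = 2*y := rfl
    rw [hc0, hc1]
    linear_combination hcomb
  have hRM : R * M = 1 := mul_eq_one_comm.mp hMR
  have hUnit : IsUnit M := ⟨⟨M, R, hMR, hRM⟩, rfl⟩
  refine ⟨hUnit, ?_⟩
  intro j
  have hinv : M⁻¹ = R := Matrix.inv_eq_right_inv hMR
  rw [hinv]
  set t : ℕ → ℝ := fun k => ∑ i, (N ^ k) i j with htdef
  have ht0 : t 0 = 1 := by rw [htdef]; simp [Matrix.one_apply]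
  have htnn : ∀ k, 0 ≤ t k := fun k => Finset.sum_nonneg fun i _ => hNk k i j
  have htle1 : ∀ k, t k ≤ 1 := fun k => hNcol k j
  have htmono : ∀ k, t (k+1) ≤ t k := fun k => hmono k j
  have htabs : ∀ k, |t k| ≤ 1 := fun k => abs_le.mpr ⟨by linarith [htnn k], htle1 k⟩
  have hswap : ∑ i, R i j = ∑' k, cseq y k * t k := by
    have h1 : (∑ i, R i j) = ∑ i, ∑' k, cseq y k * (N ^ k) i j := rfl
    rw [h1, ← Summable.tsum_finsetSum (fun i _ => hsumR i j)]
    apply tsum_congr; intro k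
    rw [htdef, Finset.mul_sum]
  rw [hswap]
  set s₀ := (1 - r) / (1 - y) with hs₀
  have hs₀pos : 0 < s₀ := div_pos (by linarith) hy1'
  have hSge : ∀ n, s₀ ≤ ∑ k ∈ Finset.range (n+1), cseq y k := by
    intro n
    have hps := cseq_psum hy0 hy1 hw n
    have hre : ((⟨y, w⟩:ℂ) ^ (n+1)).re ≤ r := by
      calc ((⟨y, w⟩:ℂ) ^ (n+1)).re ≤ ‖(⟨y, w⟩:ℂ) ^ (n+1)‖ := Complex.re_le_norm _
        _ = r ^ (n+1) := by rw [norm_pow, abs_a hy0 hy1 hw]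
        _ ≤ r ^ 1 := pow_le_pow_of_le_one hr0.le hr1.le (by omega)
        _ = r := pow_one r
    rw [hs₀, div_le_iff₀ hy1']
    linarith [hps]
  have habel : ∀ n, s₀ * (1 - t n) + (∑ k ∈ Finset.range (n+1), cseq y k) * t n
      ≤ ∑ k ∈ Finset.range (n+1), cseq y k * t k := by
    intro n
    induction n with
    | zero =>
      simp only [zero_add, Finset.sum_range_one, ht0]
      linarith
    | succ n ih =>
      rw [Finset.sum_range_succ (f := fun k => cseq y k * t k)]
      have hstep : s₀ * (1 - t (n+1)) + (∑ k ∈ Finset.range (n+2), cseq y k) * t (n+1)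
          ≤ s₀ * (1 - t n) + (∑ k ∈ Finset.range (n+1), cseq y k) * t n
            + cseq y (n+1) * t (n+1) := by
        rw [Finset.sum_range_succ]
        have h1 := hSge n
        have h2 := htmono n
        nlinarith [h1, h2]
      linarith [ih]
  have hlb : ∀ n, s₀ ≤ ∑ k ∈ Finset.range (n+1), cseq y k * t k := by
    intro n
    have h := habel n
    have h1 := hSge n
    nlinarith [htnn n, htle1 n]
  have hsumt : Summable fun k => cseq y k * t k := hsumg 0 t htabs
  have htend : Filter.Tendsto (fun n => ∑ k ∈ Finset.range (n+1), cseq y k * t k)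
      Filter.atTop (nhds (∑' k, cseq y k * t k)) := by
    have h := hsumt.hasSum.tendsto_sum_nat
    exact h.comp (Filter.tendsto_add_atTop_nat 1)
  have hfin : s₀ ≤ ∑' k, cseq y k * t k := ge_of_tendsto' htend hlb
  linarith
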